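/- Let I be an instance of (3,B2)-SAT with variables x₁,…,xₙ and clauses c₁,…,c_m, where the three literals of each clause c are listed in a fixed order, and for each variable x its two positive occurrences are in clauses c₁(x), c₂(x) and its two negative occurrences in clauses c₃(x), c₄(x). Let G = (V,E) be the finite simple graph built as follows, together with a set U ⊆ E of permitted edges. For each clause c take eight vertices ℓ¹_c, ℓ²_c, ℓ³_c, 1_c, 2_c, 3_c, a_c, b_c with forbidden edges ℓ¹_c1_c, ℓ²_c2_c, ℓ³_c3_c and permitted edges 1_ca_c, 2_ca_c, 2_cb_c, 3_cb_c. For each variable x take twelve vertices 1_x, 1^{c₁}_x, 1^{c₂}_x, x^{c₁}, x^{c₂}, 2_x, 2^{c₃}_x, 2^{c₄}_x, ¬x^{c₃}, ¬x^{c₄}, 3_x, 4_x with forbidden edges 1_x1^{c₁}_x, 1_x1^{c₂}_x, 2_x2^{c₃}_x, 2_x2^{c₄}_x, 3_x4_x and permitted edges 1_x3_x, 2_x3_x, 1^{c₁}_xx^{c₁}, 1^{c₂}_xx^{c₂}, 2^{c₃}_x¬x^{c₃}, 2^{c₄}_x¬x^{c₄}. For each clause c and each position i ∈ {1,2,3},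 if the i-th literal of c is the j-th positive occurrence (j ∈ {1,2}) of a variable x, add the permitted crossing edge x^{c_j(x)}ℓⁱ_c, and if it is the j-th negative occurrence (j ∈ {3,4}) of x, add the permitted crossing edge ¬x^{c_j(x)}ℓⁱ_c. Let U be the set of all permitted edges. Then I is satisfiable if and only if G has a maximal matching S with S ⊆ U. -/

import Mathlib

/-- Vertices of the graph built from a (3,B2)-SAT instance for Ext Edge Matching:
per clause `c` the vertices `ℓ¹_c, ℓ²_c, ℓ³_c` (`lv`), `1_c, 2_c, 3_c` (`cnum`) and two
unnamed vertices `a_c, b_c`; per variable `x` the twelve vertices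
`1_x, 1^{c₁}_x, 1^{c₂}_x, x^{c₁}, x^{c₂}, 2_x, 2^{c₃}_x, 2^{c₄}_x, ¬x^{c₃}, ¬x^{c₄}, 3_x, 4_x`. -/
inductive V12 (n m : ℕ) : Type
  | lv : Fin m → Fin 3 → V12 n m        -- ℓⁱ_c
  | cnum : Fin m → Fin 3 → V12 n m      -- 1_c, 2_c, 3_c
  | ca : Fin m → V12 n m                -- a_c
  | cb : Fin m → V12 n m                -- b_c
  | v1 : Fin n → V12 n m                -- 1_x
  | p1 : Fin n → Fin 2 → V12 n m        -- 1^{c₁}_x, 1^{c₂}_x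
  | posOcc : Fin n → Fin 2 → V12 n m    -- x^{c₁}, x^{c₂}
  | v2 : Fin n → V12 n m                -- 2_x
  | p2 : Fin n → Fin 2 → V12 n m        -- 2^{c₃}_x, 2^{c₄}_x
  | negOcc : Fin n → Fin 2 → V12 n m    -- ¬x^{c₃}, ¬x^{c₄}
  | v3 : Fin n → V12 n m                -- 3_x
  | v4 : Fin n → V12 n m                -- 4_x

/-- The forbidden edges. -/
def F12 (n m : ℕ) : Set (Sym2 (V12 n m)) :=
  {e | (∃ j : Fin m, ∃ k : Fin 3, e = s(V12.lv j k, V12.cnum j k)) ∨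
       (∃ i : Fin n, ∃ t : Fin 2,
          e = s(V12.v1 i, V12.p1 i t) ∨ e = s(V12.v2 i, V12.p2 i t)) ∨
       (∃ i : Fin n, e = s(V12.v3 i, V12.v4 i))}

/-- The permitted edges, including the crossing edges connecting the `j`-th positive
(resp. negative) occurrence vertex of a variable to the corresponding literal vertex
in the clause of that occurrence. -/
def U12 (n m : ℕ) (lit : Fin m → Fin 3 → Fin n × Bool)
    (occP occN : Fin n → Fin 2 → Fin m) : Set (Sym2 (V12 n m)) :=
  {e | (∃ j : Fin m,
          e = s(V12.cnum j 0, V12.ca j) ∨ e = s(V12.cnum j 1, V12.ca j) ∨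
          e = s(V12.cnum j 1, V12.cb j) ∨ e = s(V12.cnum j 2, V12.cb j)) ∨
       (∃ i : Fin n, e = s(V12.v1 i, V12.v3 i) ∨ e = s(V12.v2 i, V12.v3 i)) ∨
       (∃ i : Fin n, ∃ t : Fin 2,
          e = s(V12.p1 i t, V12.posOcc i t) ∨ e = s(V12.p2 i t, V12.negOcc i t)) ∨
       (∃ i : Fin n, ∃ t : Fin 2, ∃ k : Fin 3,
          (lit (occP i t) k = (i, true) ∧ e = s(V12.posOcc i t, V12.lv (occP i t) k)) ∨
          (lit (occN i t) k = (i, false) ∧ e = s(V12.negOcc i t, V12.lv (occN i t) k)))}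

/-- All edges of the constructed graph. -/
def E12 (n m : ℕ) (lit : Fin m → Fin 3 → Fin n × Bool)
    (occP occN : Fin n → Fin 2 → Fin m) : Set (Sym2 (V12 n m)) :=
  U12 n m lit occP occN ∪ F12 n m

/-- A set of edges is a matching: no two distinct edges of it share an endpoint. -/
def IsMatchingSet {V : Type*} (M : Set (Sym2 V)) : Prop :=
  ∀ e ∈ M, ∀ f ∈ M, e ≠ f → ∀ v : V, ¬ (v ∈ e ∧ v ∈ f)

namespace Stmt12
open V12

variable {n m : ℕ}

def pairF (lit : Fin m → Fin 3 → Fin n × Bool) (occP occN : Fin n → Fin 2 → Fin m)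
    (T : Fin n → Bool) (u : Fin m → Fin 3) (kP kN : Fin n → Fin 2 → Fin 3) :
    V12 n m → V12 n m
  | .lv j k => if (lit j k).2 then
      .posOcc (lit j k).1 (if occP (lit j k).1 0 = j then 0 else 1)
    else .negOcc (lit j k).1 (if occN (lit j k).1 0 = j then 0 else 1)
  | .cnum j k => if k = 1 then (if u j = 0 then .ca j else .cb j)
      else if k = 0 then .ca j else .cb j
  | .ca j => if u j = 0 then .cnum j 1 else .cnum j 0
  | .cb j => if u j = 2 then .cnum j 1 else .cnum j 2
  | .v1 i => .v3 i
  | .v2 i => .v3 i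
  | .v3 i => if T i then .v1 i else .v2 i
  | .v4 i => .v4 i
  | .p1 i t => .posOcc i t
  | .posOcc i t => if T i then .lv (occP i t) (kP i t) else .p1 i t
  | .p2 i t => .negOcc i t
  | .negOcc i t => if T i then .p2 i t else .lv (occN i t) (kN i t)

def matchS (lit : Fin m → Fin 3 → Fin n × Bool) (occP occN : Fin n → Fin 2 → Fin m)
    (T : Fin n → Bool) (u : Fin m → Fin 3) (kP kN : Fin n → Fin 2 → Fin 3) :
    Set (Sym2 (V12 n m)) :=
  {e | (∃ j, u j ≠ 0 ∧ e = s(cnum j 0, ca j)) ∨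
       (∃ j, u j = 0 ∧ e = s(cnum j 1, ca j)) ∨
       (∃ j, u j = 2 ∧ e = s(cnum j 1, cb j)) ∨
       (∃ j, u j ≠ 2 ∧ e = s(cnum j 2, cb j)) ∨
       (∃ i, T i = true ∧ e = s(v1 i, v3 i)) ∨
       (∃ i, T i = false ∧ e = s(v2 i, v3 i)) ∨
       (∃ i t, T i = false ∧ e = s(p1 i t, posOcc i t)) ∨
       (∃ i t, T i = true ∧ e = s(p2 i t, negOcc i t)) ∨
       (∃ i t, T i = true ∧ e = s(posOcc i t, lv (occP i t) (kP i t))) ∨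
       (∃ i t, T i = false ∧ e = s(negOcc i t, lv (occN i t) (kN i t)))}


lemma pair_spec (lit : Fin m → Fin 3 → Fin n × Bool) (occP occN : Fin n → Fin 2 → Fin m)
    (T : Fin n → Bool) (u : Fin m → Fin 3) (kP kN : Fin n → Fin 2 → Fin 3)
    (hkP : ∀ i t, lit (occP i t) (kP i t) = (i, true))
    (hkN : ∀ i t, lit (occN i t) (kN i t) = (i, false))
    (hoccPinj : ∀ i : Fin n, occP i 0 ≠ occP i 1)
    (hoccNinj : ∀ i : Fin n, occN i 0 ≠ occN i 1) :
    ∀ x y : V12 n m, s(x,y) ∈ matchS lit occP occN T u kP kN →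
      pairF lit occP occN T u kP kN x = y ∧ pairF lit occP occN T u kP kN y = x := by
  have key : ∀ a b : V12 n m, s(a,b) ∈ matchS lit occP occN T u kP kN →
      pairF lit occP occN T u kP kN a = b := by
    intro a b hab
    rcases hab with ⟨j,hj,h⟩|⟨j,hj,h⟩|⟨j,hj,h⟩|⟨j,hj,h⟩|⟨i,hi,h⟩|⟨i,hi,h⟩|
      ⟨i,t,hi,h⟩|⟨i,t,hi,h⟩|⟨i,t,hi,h⟩|⟨i,t,hi,h⟩ <;>
      rw [Sym2.eq_iff] at h <;>
      rcases h with ⟨rfl, rfl⟩|⟨rfl, rfl⟩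
    case inl.inl => simp [pairF]
    case inl.inr => simp [pairF, hj]
    case inr.inl.inl => simp [pairF, hj]
    case inr.inl.inr => simp [pairF, hj]
    case inr.inr.inl.inl => simp [pairF, hj]
    case inr.inr.inl.inr => simp [pairF, hj]
    case inr.inr.inr.inl.inl => simp [pairF]
    case inr.inr.inr.inl.inr => simp [pairF, hj]
    case inr.inr.inr.inr.inl.inl => simp [pairF]
    case inr.inr.inr.inr.inl.inr => simp [pairF, hi]
    case inr.inr.inr.inr.inr.inl.inl => simp [pairF]
    case inr.inr.inr.inr.inr.inl.inr => simp [pairF, hi]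
    case inr.inr.inr.inr.inr.inr.inl.inl => simp [pairF]
    case inr.inr.inr.inr.inr.inr.inl.inr => simp [pairF, hi]
    case inr.inr.inr.inr.inr.inr.inr.inl.inl => simp [pairF]
    case inr.inr.inr.inr.inr.inr.inr.inl.inr => simp [pairF, hi]
    case inr.inr.inr.inr.inr.inr.inr.inr.inl.inl => simp [pairF, hi]
    case inr.inr.inr.inr.inr.inr.inr.inr.inl.inr =>
      fin_cases t <;> simp [pairF, hkP, hoccPinj i]
    case inr.inr.inr.inr.inr.inr.inr.inr.inr.inl => simp [pairF, hi]
    case inr.inr.inr.inr.inr.inr.inr.inr.inr.inr =>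
      fin_cases t <;> simp [pairF, hkN, hoccNinj i]
  intro x y hmem
  refine ⟨key x y hmem, key y x ?_⟩
  rwa [Sym2.eq_swap] at hmem

lemma isMatching_matchS (lit : Fin m → Fin 3 → Fin n × Bool) (occP occN : Fin n → Fin 2 → Fin m)
    (T : Fin n → Bool) (u : Fin m → Fin 3) (kP kN : Fin n → Fin 2 → Fin 3)
    (hkP : ∀ i t, lit (occP i t) (kP i t) = (i, true))
    (hkN : ∀ i t, lit (occN i t) (kN i t) = (i, false))
    (hoccPinj : ∀ i : Fin n, occP i 0 ≠ occP i 1)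
    (hoccNinj : ∀ i : Fin n, occN i 0 ≠ occN i 1) :
    IsMatchingSet (matchS lit occP occN T u kP kN) := by
  have hp := pair_spec lit occP occN T u kP kN hkP hkN hoccPinj hoccNinj
  have hedge : ∀ e ∈ matchS lit occP occN T u kP kN, ∀ v, v ∈ e →
      e = s(v, pairF lit occP occN T u kP kN v) := by
    intro e
    induction e using Sym2.ind with
    | _ a b =>
      intro he v hv
      rw [Sym2.mem_iff] at hv
      rcases hv with rfl | rfl
      · rw [(hp v b he).1]
      · rw [(hp a v he).2, Sym2.eq_swap]
  intro e he f hf hne v hv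
  exact hne ((hedge e he v hv.1).trans (hedge f hf v hv.2).symm)

lemma matchS_subset_U (lit : Fin m → Fin 3 → Fin n × Bool) (occP occN : Fin n → Fin 2 → Fin m)
    (T : Fin n → Bool) (u : Fin m → Fin 3) (kP kN : Fin n → Fin 2 → Fin 3)
    (hkP : ∀ i t, lit (occP i t) (kP i t) = (i, true))
    (hkN : ∀ i t, lit (occN i t) (kN i t) = (i, false)) :
    matchS lit occP occN T u kP kN ⊆ U12 n m lit occP occN := by
  intro e he
  rcases he with ⟨j,hj,rfl⟩|⟨j,hj,rfl⟩|⟨j,hj,rfl⟩|⟨j,hj,rfl⟩|⟨i,hi,rfl⟩|⟨i,hi,rfl⟩|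
    ⟨i,t,hi,rfl⟩|⟨i,t,hi,rfl⟩|⟨i,t,hi,rfl⟩|⟨i,t,hi,rfl⟩
  · exact Or.inl ⟨j, Or.inl rfl⟩
  · exact Or.inl ⟨j, Or.inr (Or.inl rfl)⟩
  · exact Or.inl ⟨j, Or.inr (Or.inr (Or.inl rfl))⟩
  · exact Or.inl ⟨j, Or.inr (Or.inr (Or.inr rfl))⟩
  · exact Or.inr (Or.inl ⟨i, Or.inl rfl⟩)
  · exact Or.inr (Or.inl ⟨i, Or.inr rfl⟩)
  · exact Or.inr (Or.inr (Or.inl ⟨i, t, Or.inl rfl⟩))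
  · exact Or.inr (Or.inr (Or.inl ⟨i, t, Or.inr rfl⟩))
  · exact Or.inr (Or.inr (Or.inr ⟨i, t, kP i t, Or.inl ⟨hkP i t, rfl⟩⟩))
  · exact Or.inr (Or.inr (Or.inr ⟨i, t, kN i t, Or.inr ⟨hkN i t, rfl⟩⟩))

lemma fin3_cases (a : Fin 3) : a = 0 ∨ a = 1 ∨ a = 2 := by omega

lemma cover_matchS (lit : Fin m → Fin 3 → Fin n × Bool) (occP occN : Fin n → Fin 2 → Fin m)
    (T : Fin n → Bool) (u : Fin m → Fin 3) (kP kN : Fin n → Fin 2 → Fin 3)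
    (hdist : ∀ j : Fin m, Function.Injective fun k : Fin 3 => (lit j k).1)
    (hkP : ∀ i t, lit (occP i t) (kP i t) = (i, true))
    (hkN : ∀ i t, lit (occN i t) (kN i t) = (i, false))
    (hoccPall : ∀ (i : Fin n) (j : Fin m) (k : Fin 3),
      lit j k = (i, true) → ∃ t : Fin 2, occP i t = j)
    (hoccNall : ∀ (i : Fin n) (j : Fin m) (k : Fin 3),
      lit j k = (i, false) → ∃ t : Fin 2, occN i t = j)
    (hu : ∀ j, T (lit j (u j)).1 = (lit j (u j)).2) :
    ∀ e ∈ E12 n m lit occP occN, ∃ g ∈ matchS lit occP occN T u kP kN, ∃ v, v ∈ g ∧ v ∈ e := by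
  set S := matchS lit occP occN T u kP kN with hS
  have hca : ∀ j, ∃ g ∈ S, ca j ∈ g := by
    intro j
    by_cases h : u j = 0
    · exact ⟨_, Or.inr (Or.inl ⟨j, h, rfl⟩), by simp⟩
    · exact ⟨_, Or.inl ⟨j, h, rfl⟩, by simp⟩
  have hcb : ∀ j, ∃ g ∈ S, cb j ∈ g := by
    intro j
    by_cases h : u j = 2
    · exact ⟨_, Or.inr (Or.inr (Or.inl ⟨j, h, rfl⟩)), by simp⟩
    · exact ⟨_, Or.inr (Or.inr (Or.inr (Or.inl ⟨j, h, rfl⟩))), by simp⟩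
  have hv3 : ∀ i, ∃ g ∈ S, v3 i ∈ g := by
    intro i
    cases h : T i
    · exact ⟨_, Or.inr (Or.inr (Or.inr (Or.inr (Or.inr (Or.inl ⟨i, h, rfl⟩))))), by simp⟩
    · exact ⟨_, Or.inr (Or.inr (Or.inr (Or.inr (Or.inl ⟨i, h, rfl⟩)))), by simp⟩
  have hpos : ∀ i t, ∃ g ∈ S, posOcc i t ∈ g := by
    intro i t
    cases h : T i
    · exact ⟨_, Or.inr (Or.inr (Or.inr (Or.inr (Or.inr (Or.inr (Or.inl ⟨i, t, h, rfl⟩)))))),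
        by simp⟩
    · exact ⟨_, Or.inr (Or.inr (Or.inr (Or.inr (Or.inr (Or.inr (Or.inr (Or.inr
        (Or.inl ⟨i, t, h, rfl⟩)))))))), by simp⟩
  have hneg : ∀ i t, ∃ g ∈ S, negOcc i t ∈ g := by
    intro i t
    cases h : T i
    · exact ⟨_, Or.inr (Or.inr (Or.inr (Or.inr (Or.inr (Or.inr (Or.inr (Or.inr
        (Or.inr ⟨i, t, h, rfl⟩)))))))), by simp⟩
    · exact ⟨_, Or.inr (Or.inr (Or.inr (Or.inr (Or.inr (Or.inr (Or.inr
        (Or.inl ⟨i, t, h, rfl⟩))))))), by simp⟩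
  intro e he
  rcases he with (⟨j, h|h|h|h⟩ | ⟨i, h|h⟩ | ⟨i,t,h|h⟩ | ⟨i,t,k,⟨hl,h⟩|⟨hl,h⟩⟩) |
    (⟨j,k,h⟩ | ⟨i,t,h|h⟩ | ⟨i,h⟩) <;> subst h
  · obtain ⟨g, hg, hv⟩ := hca j; exact ⟨g, hg, ca j, hv, by simp⟩
  · obtain ⟨g, hg, hv⟩ := hca j; exact ⟨g, hg, ca j, hv, by simp⟩
  · obtain ⟨g, hg, hv⟩ := hcb j; exact ⟨g, hg, cb j, hv, by simp⟩
  · obtain ⟨g, hg, hv⟩ := hcb j; exact ⟨g, hg, cb j, hv, by simp⟩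
  · obtain ⟨g, hg, hv⟩ := hv3 i; exact ⟨g, hg, v3 i, hv, by simp⟩
  · obtain ⟨g, hg, hv⟩ := hv3 i; exact ⟨g, hg, v3 i, hv, by simp⟩
  · obtain ⟨g, hg, hv⟩ := hpos i t; exact ⟨g, hg, posOcc i t, hv, by simp⟩
  · obtain ⟨g, hg, hv⟩ := hneg i t; exact ⟨g, hg, negOcc i t, hv, by simp⟩
  · obtain ⟨g, hg, hv⟩ := hpos i t; exact ⟨g, hg, posOcc i t, hv, by simp⟩
  · obtain ⟨g, hg, hv⟩ := hneg i t; exact ⟨g, hg, negOcc i t, hv, by simp⟩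
  -- forbidden edge lv j k -- cnum j k
  · by_cases hk : k = u j
    · have hu' : T (lit j k).1 = (lit j k).2 := by rw [hk]; exact hu j
      cases hb : (lit j k).2
      · have hl : lit j k = ((lit j k).1, false) := by rw [← hb]
        obtain ⟨t, ht⟩ := hoccNall _ j k hl
        have hkeq : kN (lit j k).1 t = k := by
          have h2 := hkN (lit j k).1 t
          rw [ht] at h2
          apply hdist j
          show (lit j (kN (lit j k).1 t)).1 = (lit j k).1
          rw [h2]
        have hT : T (lit j k).1 = false := hu'.trans hb
        refine ⟨_, Or.inr (Or.inr (Or.inr (Or.inr (Or.inr (Or.inr (Or.inr (Or.inr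
          (Or.inr ⟨(lit j k).1, t, hT, rfl⟩)))))))), lv j k, ?_, by simp⟩
        rw [Sym2.mem_iff]
        right; rw [ht, hkeq]
      · have hl : lit j k = ((lit j k).1, true) := by rw [← hb]
        obtain ⟨t, ht⟩ := hoccPall _ j k hl
        have hkeq : kP (lit j k).1 t = k := by
          have h2 := hkP (lit j k).1 t
          rw [ht] at h2
          apply hdist j
          show (lit j (kP (lit j k).1 t)).1 = (lit j k).1
          rw [h2]
        have hT : T (lit j k).1 = true := hu'.trans hb
        refine ⟨_, Or.inr (Or.inr (Or.inr (Or.inr (Or.inr (Or.inr (Or.inr (Or.inr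
          (Or.inl ⟨(lit j k).1, t, hT, rfl⟩)))))))), lv j k, ?_, by simp⟩
        rw [Sym2.mem_iff]
        right; rw [ht, hkeq]
    · rcases fin3_cases k with rfl | rfl | rfl
      · exact ⟨_, Or.inl ⟨j, fun h => hk h.symm, rfl⟩, cnum j 0, by simp, by simp⟩
      · rcases fin3_cases (u j) with h | h | h
        · exact ⟨_, Or.inr (Or.inl ⟨j, h, rfl⟩), cnum j 1, by simp, by simp⟩
        · exact absurd h.symm hk
        · exact ⟨_, Or.inr (Or.inr (Or.inl ⟨j, h, rfl⟩)), cnum j 1, by simp, by simp⟩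
      · exact ⟨_, Or.inr (Or.inr (Or.inr (Or.inl ⟨j, fun h => hk h.symm, rfl⟩))),
          cnum j 2, by simp, by simp⟩
  -- forbidden edge v1 i -- p1 i t
  · cases hT : T i
    · exact ⟨_, Or.inr (Or.inr (Or.inr (Or.inr (Or.inr (Or.inr (Or.inl ⟨i, t, hT, rfl⟩)))))),
        p1 i t, by simp, by simp⟩
    · exact ⟨_, Or.inr (Or.inr (Or.inr (Or.inr (Or.inl ⟨i, hT, rfl⟩)))), v1 i, by simp, by simp⟩
  -- forbidden edge v2 i -- p2 i t
  · cases hT : T i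
    · exact ⟨_, Or.inr (Or.inr (Or.inr (Or.inr (Or.inr (Or.inl ⟨i, hT, rfl⟩))))),
        v2 i, by simp, by simp⟩
    · exact ⟨_, Or.inr (Or.inr (Or.inr (Or.inr (Or.inr (Or.inr (Or.inr (Or.inl ⟨i, t, hT, rfl⟩))))))),
        p2 i t, by simp, by simp⟩
  -- forbidden edge v3 i -- v4 i
  · obtain ⟨g, hg, hv⟩ := hv3 i; exact ⟨g, hg, v3 i, hv, by simp⟩

section Reverse
variable {lit : Fin m → Fin 3 → Fin n × Bool} {occP occN : Fin n → Fin 2 → Fin m}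
  {g : Sym2 (V12 n m)}

lemma mem_U_lv {j : Fin m} {k : Fin 3} (hg : g ∈ U12 n m lit occP occN) (hv : lv j k ∈ g) :
    (∃ i t, occP i t = j ∧ lit j k = (i, true) ∧ g = s(posOcc i t, lv j k)) ∨
    (∃ i t, occN i t = j ∧ lit j k = (i, false) ∧ g = s(negOcc i t, lv j k)) := by
  rcases hg with ⟨j',h|h|h|h⟩|⟨i,h|h⟩|⟨i,t,h|h⟩|⟨i,t,k',⟨hl,h⟩|⟨hl,h⟩⟩ <;> subst h <;>
    rw [Sym2.mem_iff] at hv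
  · rcases hv with hv|hv <;> simp at hv
  · rcases hv with hv|hv <;> simp at hv
  · rcases hv with hv|hv <;> simp at hv
  · rcases hv with hv|hv <;> simp at hv
  · rcases hv with hv|hv <;> simp at hv
  · rcases hv with hv|hv <;> simp at hv
  · rcases hv with hv|hv <;> simp at hv
  · rcases hv with hv|hv <;> simp at hv
  · rcases hv with hv|hv
    · exact absurd hv (by simp)
    · injection hv with h1 h2; subst h1; subst h2
      exact Or.inl ⟨i, t, rfl, hl, rfl⟩
  · rcases hv with hv|hv
    · exact absurd hv (by simp)
    · injection hv with h1 h2; subst h1; subst h2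
      exact Or.inr ⟨i, t, rfl, hl, rfl⟩

lemma mem_U_cnum0 {j : Fin m} (hg : g ∈ U12 n m lit occP occN) (hv : cnum j 0 ∈ g) :
    g = s(cnum j 0, ca j) := by
  rcases hg with ⟨j',h|h|h|h⟩|⟨i',h|h⟩|⟨i',t',h|h⟩|⟨i',t',k',⟨hl,h⟩|⟨hl,h⟩⟩ <;> subst h <;>
    rw [Sym2.mem_iff] at hv <;> rcases hv with hv|hv <;> simp_all [Sym2.eq_iff]

lemma mem_U_cnum1 {j : Fin m} (hg : g ∈ U12 n m lit occP occN) (hv : cnum j 1 ∈ g) :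
    g = s(cnum j 1, ca j) ∨ g = s(cnum j 1, cb j) := by
  rcases hg with ⟨j',h|h|h|h⟩|⟨i',h|h⟩|⟨i',t',h|h⟩|⟨i',t',k',⟨hl,h⟩|⟨hl,h⟩⟩ <;> subst h <;>
    rw [Sym2.mem_iff] at hv <;> rcases hv with hv|hv <;> simp_all [Sym2.eq_iff]

lemma mem_U_cnum2 {j : Fin m} (hg : g ∈ U12 n m lit occP occN) (hv : cnum j 2 ∈ g) :
    g = s(cnum j 2, cb j) := by
  rcases hg with ⟨j',h|h|h|h⟩|⟨i',h|h⟩|⟨i',t',h|h⟩|⟨i',t',k',⟨hl,h⟩|⟨hl,h⟩⟩ <;> subst h <;>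
    rw [Sym2.mem_iff] at hv <;> rcases hv with hv|hv <;> simp_all [Sym2.eq_iff]

lemma mem_U_v1 {i : Fin n} (hg : g ∈ U12 n m lit occP occN) (hv : v1 i ∈ g) :
    g = s(v1 i, v3 i) := by
  rcases hg with ⟨j',h|h|h|h⟩|⟨i',h|h⟩|⟨i',t',h|h⟩|⟨i',t',k',⟨hl,h⟩|⟨hl,h⟩⟩ <;> subst h <;>
    rw [Sym2.mem_iff] at hv <;> rcases hv with hv|hv <;> simp_all [Sym2.eq_iff]

lemma mem_U_v2 {i : Fin n} (hg : g ∈ U12 n m lit occP occN) (hv : v2 i ∈ g) :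
    g = s(v2 i, v3 i) := by
  rcases hg with ⟨j',h|h|h|h⟩|⟨i',h|h⟩|⟨i',t',h|h⟩|⟨i',t',k',⟨hl,h⟩|⟨hl,h⟩⟩ <;> subst h <;>
    rw [Sym2.mem_iff] at hv <;> rcases hv with hv|hv <;> simp_all [Sym2.eq_iff]

lemma mem_U_p1 {i : Fin n} {t : Fin 2} (hg : g ∈ U12 n m lit occP occN) (hv : p1 i t ∈ g) :
    g = s(p1 i t, posOcc i t) := by
  rcases hg with ⟨j',h|h|h|h⟩|⟨i',h|h⟩|⟨i',t',h|h⟩|⟨i',t',k',⟨hl,h⟩|⟨hl,h⟩⟩ <;> subst h <;>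
    rw [Sym2.mem_iff] at hv <;> rcases hv with hv|hv <;> simp_all [Sym2.eq_iff]

lemma mem_U_p2 {i : Fin n} {t : Fin 2} (hg : g ∈ U12 n m lit occP occN) (hv : p2 i t ∈ g) :
    g = s(p2 i t, negOcc i t) := by
  rcases hg with ⟨j',h|h|h|h⟩|⟨i',h|h⟩|⟨i',t',h|h⟩|⟨i',t',k',⟨hl,h⟩|⟨hl,h⟩⟩ <;> subst h <;>
    rw [Sym2.mem_iff] at hv <;> rcases hv with hv|hv <;> simp_all [Sym2.eq_iff]


lemma not_U_of_F {e : Sym2 (V12 n m)} (hF : e ∈ F12 n m) : e ∉ U12 n m lit occP occN := by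
  intro hU
  rcases hF with ⟨j,k,h⟩|⟨i,t,h|h⟩|⟨i,h⟩ <;> subst h <;>
  rcases hU with ⟨j',h|h|h|h⟩|⟨i',h|h⟩|⟨i',t',h|h⟩|⟨i',t',k',⟨hl,h⟩|⟨hl,h⟩⟩ <;>
    simp_all [Sym2.eq_iff]

lemma exists_touch {S : Set (Sym2 (V12 n m))} (hS : IsMatchingSet S)
    {e : Sym2 (V12 n m)} (hnm : ¬ IsMatchingSet (insert e S)) :
    ∃ g ∈ S, ∃ v, v ∈ g ∧ v ∈ e := by
  by_contra hcon
  push_neg at hcon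
  apply hnm
  intro a ha b hb hab v hv
  rcases ha with rfl|ha <;> rcases hb with rfl|hb
  · exact hab rfl
  · exact hcon b hb v hv.2 hv.1
  · exact hcon a ha v hv.1 hv.2
  · exact hS a ha b hb hab v hv

lemma reverse_main {S : Set (Sym2 (V12 n m))}
    (hsub : S ⊆ U12 n m lit occP occN) (hSm : IsMatchingSet S)
    (hmax : ∀ e ∈ E12 n m lit occP occN \ S, ¬ IsMatchingSet (insert e S)) (j : Fin m) :
    ∃ k : Fin 3,
      ((lit j k).2 = true ∧ s(v1 (lit j k).1, v3 (lit j k).1) ∈ S) ∨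
      ((lit j k).2 = false ∧ s(v1 (lit j k).1, v3 (lit j k).1) ∉ S) := by
  -- every forbidden clause edge is touched
  have hk : ∀ k : Fin 3, ∃ g ∈ S, lv j k ∈ g ∨ cnum j k ∈ g := by
    intro k
    have hE : s(lv j k, cnum j k) ∈ E12 n m lit occP occN :=
      Set.mem_union_right _ (Or.inl ⟨j, k, rfl⟩)
    have hnS : s(lv j k, cnum j k) ∉ S :=
      fun h => not_U_of_F (Or.inl ⟨j, k, rfl⟩) (hsub h)
    obtain ⟨g, hg, v, hvg, hve⟩ := exists_touch hSm (hmax _ ⟨hE, hnS⟩)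
    rw [Sym2.mem_iff] at hve
    rcases hve with rfl|rfl
    · exact ⟨g, hg, Or.inl hvg⟩
    · exact ⟨g, hg, Or.inr hvg⟩
  -- some literal vertex is matched
  have hlv : ∃ (k : Fin 3) (g : Sym2 (V12 n m)), g ∈ S ∧ lv j k ∈ g := by
    by_contra hnone
    push_neg at hnone
    have hcn : ∀ k : Fin 3, ∃ g ∈ S, cnum j k ∈ g := by
      intro k
      obtain ⟨g, hg, h|h⟩ := hk k
      · exact absurd h (hnone k g hg)
      · exact ⟨g, hg, h⟩
    obtain ⟨g0, hg0, hm0⟩ := hcn 0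
    obtain ⟨g1, hg1, hm1⟩ := hcn 1
    obtain ⟨g2, hg2, hm2⟩ := hcn 2
    have e0 := mem_U_cnum0 (hsub hg0) hm0
    have e2 := mem_U_cnum2 (hsub hg2) hm2
    rcases mem_U_cnum1 (hsub hg1) hm1 with e1 | e1
    · exact hSm g0 hg0 g1 hg1 (by rw [e0, e1]; simp [Sym2.eq_iff]) (ca j)
        ⟨by rw [e0]; simp, by rw [e1]; simp⟩
    · exact hSm g1 hg1 g2 hg2 (by rw [e1, e2]; simp [Sym2.eq_iff]) (cb j)
        ⟨by rw [e1]; simp, by rw [e2]; simp⟩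
  obtain ⟨k, g, hg, hlvg⟩ := hlv
  rcases mem_U_lv (hsub hg) hlvg with ⟨i, t, hocc, hlit, hge⟩ | ⟨i, t, hocc, hlit, hge⟩
  · -- positive crossing edge: variable must be true
    have hp1 : ∀ h ∈ S, p1 i t ∉ h := by
      intro h hh hmem
      have he : h = s(p1 i t, posOcc i t) := mem_U_p1 (hsub hh) hmem
      exact hSm h hh g hg (by rw [he, hge]; simp [Sym2.eq_iff]) (posOcc i t)
        ⟨by rw [he]; simp, by rw [hge]; simp⟩
    have hE : s(v1 i, p1 i t) ∈ E12 n m lit occP occN :=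
      Set.mem_union_right _ (Or.inr (Or.inl ⟨i, t, Or.inl rfl⟩))
    have hnS : s(v1 i, p1 i t) ∉ S :=
      fun h => not_U_of_F (Or.inr (Or.inl ⟨i, t, Or.inl rfl⟩)) (hsub h)
    obtain ⟨g', hg', v, hvg, hve⟩ := exists_touch hSm (hmax _ ⟨hE, hnS⟩)
    rw [Sym2.mem_iff] at hve
    rcases hve with rfl|rfl
    · have := mem_U_v1 (hsub hg') hvg
      rw [this] at hg'
      refine ⟨k, Or.inl ⟨by rw [hlit], ?_⟩⟩
      rw [hlit]
      exact hg'
    · exact absurd hvg (hp1 g' hg')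
  · -- negative crossing edge: variable must be false
    have hp2 : ∀ h ∈ S, p2 i t ∉ h := by
      intro h hh hmem
      have he : h = s(p2 i t, negOcc i t) := mem_U_p2 (hsub hh) hmem
      exact hSm h hh g hg (by rw [he, hge]; simp [Sym2.eq_iff]) (negOcc i t)
        ⟨by rw [he]; simp, by rw [hge]; simp⟩
    have hE : s(v2 i, p2 i t) ∈ E12 n m lit occP occN :=
      Set.mem_union_right _ (Or.inr (Or.inl ⟨i, t, Or.inr rfl⟩))
    have hnS : s(v2 i, p2 i t) ∉ S :=
      fun h => not_U_of_F (Or.inr (Or.inl ⟨i, t, Or.inr rfl⟩)) (hsub h)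
    obtain ⟨g', hg', v, hvg, hve⟩ := exists_touch hSm (hmax _ ⟨hE, hnS⟩)
    rw [Sym2.mem_iff] at hve
    rcases hve with rfl|rfl
    · have hv2 := mem_U_v2 (hsub hg') hvg
      rw [hv2] at hg'
      refine ⟨k, Or.inr ⟨by rw [hlit], ?_⟩⟩
      rw [hlit]
      intro hmem
      exact hSm _ hmem _ hg' (by simp [Sym2.eq_iff]) (v3 i) ⟨by simp, by simp⟩
    · exact absurd hvg (hp2 g' hg')


end Reverse

end Stmt12

/-- a (3,B2)-SAT instance is satisfiable iff the constructed graph has a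
maximal matching consisting of permitted edges only. -/
theorem stmt_12 (n m : ℕ) (lit : Fin m → Fin 3 → Fin n × Bool)
    (occP occN : Fin n → Fin 2 → Fin m)
    (hdist : ∀ j : Fin m, Function.Injective fun k : Fin 3 => (lit j k).1)
    (hpos : ∀ v : Fin n,
      (Finset.univ.filter fun p : Fin m × Fin 3 => lit p.1 p.2 = (v, true)).card = 2)
    (hneg : ∀ v : Fin n,
      (Finset.univ.filter fun p : Fin m × Fin 3 => lit p.1 p.2 = (v, false)).card = 2)
    (hoccP : ∀ i t, ∃ k : Fin 3, lit (occP i t) k = (i, true))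
    (hoccPinj : ∀ i : Fin n, occP i 0 ≠ occP i 1)
    (hoccPall : ∀ (i : Fin n) (j : Fin m) (k : Fin 3),
      lit j k = (i, true) → ∃ t : Fin 2, occP i t = j)
    (hoccN : ∀ i t, ∃ k : Fin 3, lit (occN i t) k = (i, false))
    (hoccNinj : ∀ i : Fin n, occN i 0 ≠ occN i 1)
    (hoccNall : ∀ (i : Fin n) (j : Fin m) (k : Fin 3),
      lit j k = (i, false) → ∃ t : Fin 2, occN i t = j) :
    (∃ T : Fin n → Bool, ∀ j : Fin m, ∃ k : Fin 3, T (lit j k).1 = (lit j k).2) ↔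
      (∃ S : Set (Sym2 (V12 n m)), S ⊆ U12 n m lit occP occN ∧ IsMatchingSet S ∧
        ∀ e ∈ E12 n m lit occP occN \ S, ¬ IsMatchingSet (insert e S)) := by
  classical
  constructor
  · rintro ⟨T, hT⟩
    choose u hu using hT
    choose kP hkP using hoccP
    choose kN hkN using hoccN
    refine ⟨Stmt12.matchS lit occP occN T u kP kN,
      Stmt12.matchS_subset_U lit occP occN T u kP kN hkP hkN,
      Stmt12.isMatching_matchS lit occP occN T u kP kN hkP hkN hoccPinj hoccNinj, ?_⟩
    rintro e ⟨hE, hnS⟩ hmat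
    obtain ⟨g, hg, v, hvg, hve⟩ :=
      Stmt12.cover_matchS lit occP occN T u kP kN hdist hkP hkN hoccPall hoccNall hu e hE
    exact hmat e (Set.mem_insert _ _) g (Set.mem_insert_of_mem _ hg)
      (fun h => hnS (h ▸ hg)) v ⟨hve, hvg⟩
  · rintro ⟨S, hsub, hSm, hmax⟩
    refine ⟨fun i => if s(V12.v1 i, V12.v3 i) ∈ S then true else false, fun j => ?_⟩
    obtain ⟨k, ⟨h2, hin⟩ | ⟨h2, hout⟩⟩ := Stmt12.reverse_main hsub hSm hmax j
    · exact ⟨k, by simp only []; rw [if_pos hin, h2]⟩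
    · exact ⟨k, by simp only []; rw [if_neg hout, h2]⟩
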